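/- For any subset S of features and any feature i that is conditionally independent of y given nothing and independent of x_S (i.e., p(x_i|y) = p(x_i) for all y), the Naive Bayes variational lower bound is unchanged by adding i: I_LB(x_{S∪{i}} : y) = I_LB(x_S : y), where I_LB(x_S:y) = E_{p(x_S,y)}[ln(Π_{j∈S} p(x_j|y) / Σ_{y'} p(y') Π_{j∈S} p(x_j|y'))]. -/

import Mathlib

open Finset

/-- Marginal pmf of `(x_j, y)` of a joint pmf `p` on `(Fin D → V) × Y`. -/
noncomputable def margI {Y V : Type*} [Fintype Y] [Fintype V] [DecidableEq V] {D : ℕ}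
    (p : (Fin D → V) → Y → ℝ) (j : Fin D) (v : V) (y : Y) : ℝ :=
  ∑ x : Fin D → V, if x j = v then p x y else 0

/-- Naive Bayes variational lower bound for a feature subset `S`:
`I_LB(x_S:y) = E_{p(x_S,y)}[ln(∏_{j∈S} p(x_j|y) / ∑_{y'} p(y') ∏_{j∈S} p(x_j|y'))]`. -/
noncomputable def ILB {Y V : Type*} [Fintype Y] [Fintype V] [DecidableEq V] {D : ℕ}
    (p : (Fin D → V) → Y → ℝ) (S : Finset (Fin D)) : ℝ :=
  ∑ x : Fin D → V, ∑ y, p x y *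
    Real.log ((∏ j ∈ S, margI p j (x j) y / (∑ x', p x' y)) /
      (∑ y', (∑ x', p x' y') * ∏ j ∈ S, margI p j (x j) y' / (∑ x'', p x'' y')))

/-- Adding an irrelevant feature `i` (one with `p(x_i|y) = p(x_i)` for every `y`
with `p(y) > 0`) leaves the Naive Bayes variational lower bound unchanged:
`I_LB(x_{S∪{i}}:y) = I_LB(x_S:y)`. -/
theorem stmt7 {Y V : Type*} [Fintype Y] [Fintype V] [DecidableEq V] {D : ℕ}
    (p : (Fin D → V) → Y → ℝ)
    (hp0 : ∀ x y, 0 ≤ p x y) (hp1 : ∑ x, ∑ y, p x y = 1)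
    (S : Finset (Fin D)) (i : Fin D) (hi : i ∉ S)
    (hirr : ∀ (v : V) (y : Y), 0 < (∑ x, p x y) →
      margI p i v y / (∑ x, p x y) = ∑ y', margI p i v y') :
    ILB p (insert i S) = ILB p S := by
  have hmarg0 : ∀ (j : Fin D) (v : V) (y : Y), 0 ≤ margI p j v y := by
    intro j v y
    apply Finset.sum_nonneg
    intro x _
    split <;> [exact hp0 x y; exact le_refl 0]
  unfold ILB
  refine Finset.sum_congr rfl (fun x _ => Finset.sum_congr rfl (fun y _ => ?_))
  by_cases hpxy : p x y = 0
  · rw [hpxy]; ring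
  · have hpxy' : 0 < p x y := lt_of_le_of_ne (hp0 x y) (Ne.symm hpxy)
    have hpy : 0 < ∑ x', p x' y :=
      lt_of_lt_of_le hpxy' (Finset.single_le_sum (fun x' _ => hp0 x' y) (Finset.mem_univ x))
    set m : ℝ := ∑ y', margI p i (x i) y' with hm_def
    have hmi : p x y ≤ margI p i (x i) y := by
      have h := Finset.single_le_sum (f := fun x' => if x' i = x i then p x' y else 0)
        (fun x' _ => by split <;> [exact hp0 x' y; exact le_refl 0]) (Finset.mem_univ x)
      simpa [margI] using h
    have hm : 0 < m :=
      lt_of_lt_of_le (lt_of_lt_of_le hpxy' hmi)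
        (Finset.single_le_sum (fun y' _ => hmarg0 i (x i) y') (Finset.mem_univ y))
    congr 1
    have hnum : (∏ j ∈ insert i S, margI p j (x j) y / (∑ x', p x' y))
        = m * ∏ j ∈ S, margI p j (x j) y / (∑ x', p x' y) := by
      rw [Finset.prod_insert hi, hirr (x i) y hpy]
    have hden : (∑ y', (∑ x', p x' y') * ∏ j ∈ insert i S, margI p j (x j) y' / (∑ x'', p x'' y'))
        = m * ∑ y', (∑ x', p x' y') * ∏ j ∈ S, margI p j (x j) y' / (∑ x'', p x'' y') := by
      rw [Finset.mul_sum]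
      refine Finset.sum_congr rfl (fun y' _ => ?_)
      by_cases hpy' : (∑ x', p x' y') = 0
      · rw [hpy']; ring
      · have hpy'' : 0 < ∑ x', p x' y' :=
          lt_of_le_of_ne (Finset.sum_nonneg (fun x' _ => hp0 x' y')) (Ne.symm hpy')
        rw [Finset.prod_insert hi, hirr (x i) y' hpy'']
        ring
    rw [hnum, hden, mul_div_mul_left _ _ hm.ne']
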